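/- arXiv:2505.00349 — 2 statements merged into one kernel-verified Lean document; each statement's English description precedes it below -/
import Mathlib

section
/- Let $0<\mu\le L$, $\lambda>0$, $m\le n$, $r\in[m]$. Suppose $x,g,y,v\in\mathbb{R}^m$ satisfy: $x_i>0$ and $g_i=\lambda$ for $i\in[r]$; $x_i=0$ and $g_i\in[0,\lambda+L\min_{j\in[r]}x_j]$ for $i\in[m]\setminus[r]$; $y_i\ge 0$ and $v_i\ge 0$ for all $i$; and $x,y$ are sorted in descending order. Define $\bar X = \widetilde{\mathrm{Diag}}(x)$, $\bar G = \widetilde{\mathrm{Diag}}(g)\in\mathbb{R}^{m\times n}$, and (assuming $\bar G + \mu\bar X = G^* + \mu X^*$ where $X^* = \widetilde{\mathrm{Diag}}(y)$, $G^* = \widetilde{\mathrm{Diag}}(v)$) the quadratic function $h(X) = \frac{L}{2}\sum_{i=1}^m\sum_{j\neq i}X_{ij}^2 + \frac{\mu}{2}\sum_{i=1}^m(X_{ii}-\bar X_{ii})^2 - \langle\bar G, X\rangle$. Then $h$ is $\mu$-strongly convex, $\nabla h$ is $L$-Lipschitz, $\nabla h(\bar X) = -\bar G$, and $\nabla h(X^*)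 = -G^*$. -/
open Matrix Finset

attribute [local instance] Matrix.frobeniusNormedAddCommGroup Matrix.frobeniusNormedSpace

def mdot {m n : ℕ} (A B : Matrix (Fin m) (Fin n) ℝ) : ℝ := ∑ i, ∑ j, A i j * B i j

noncomputable def frob {m n : ℕ} (A : Matrix (Fin m) (Fin n) ℝ) : ℝ := Real.sqrt (mdot A A)

def IsOrth {k : ℕ} (R : Matrix (Fin k) (Fin k) ℝ) : Prop := Rᵀ * R = 1

def rdg (a b : ℕ) {c : ℕ} (x : Fin c → ℝ) : Matrix (Fin a) (Fin b) ℝ :=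
  Matrix.of fun i j => if h : (i : ℕ) = (j : ℕ) ∧ (i : ℕ) < c then x ⟨i, h.2⟩ else 0

noncomputable def descSort {k : ℕ} (f : Fin k → ℝ) : Fin k → ℝ := fun i => f (Tuple.sort f i.rev)

noncomputable def sigCol {a r : ℕ} (X : Matrix (Fin a) (Fin r) ℝ) : Fin r → ℝ :=
  descSort fun i => Real.sqrt ((Matrix.isHermitian_conjTranspose_mul_self X).eigenvalues i)

noncomputable def sigRow {a b : ℕ} (X : Matrix (Fin a) (Fin b) ℝ) : Fin a → ℝ :=
  descSort fun i => Real.sqrt ((Matrix.isHermitian_mul_conjTranspose_self X).eigenvalues i)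

noncomputable def toDual {m n : ℕ} (G : Matrix (Fin m) (Fin n) ℝ) :
    Matrix (Fin m) (Fin n) ℝ →L[ℝ] ℝ :=
  LinearMap.toContinuousLinearMap
    { toFun := fun Y => mdot G Y
      map_add' := fun Y Z => by
        simp [mdot, Matrix.add_apply, mul_add, Finset.sum_add_distrib]
      map_smul' := fun c Y => by
        simp [mdot, Matrix.smul_apply, smul_eq_mul, Finset.mul_sum, mul_left_comm] }

noncomputable def enorm2 {k : ℕ} (v : Fin k → ℝ) : ℝ := Real.sqrt (∑ i, v i ^ 2)

def subdiff {m n : ℕ} (f : Matrix (Fin m) (Fin n) ℝ → ℝ) (X : Matrix (Fin m) (Fin n) ℝ) :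
    Set (Matrix (Fin m) (Fin n) ℝ) := {G | ∀ Y, f X + mdot G (Y - X) ≤ f Y}

/-! ### Auxiliary material -/

/-- Evaluation at an entry, as a continuous linear map. -/
noncomputable def evalCLM {m n : ℕ} (i : Fin m) (j : Fin n) :
    Matrix (Fin m) (Fin n) ℝ →L[ℝ] ℝ :=
  LinearMap.toContinuousLinearMap
    { toFun := fun X => X i j
      map_add' := fun _ _ => rfl
      map_smul' := fun _ _ => rfl }

lemma evalCLM_apply {m n : ℕ} (i : Fin m) (j : Fin n) (X : Matrix (Fin m) (Fin n) ℝ) :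
    evalCLM i j X = X i j := rfl

lemma sum_ite_cast {n : ℕ} (k : ℕ) (hk : k < n) (f : Fin n → ℝ) :
    ∑ j : Fin n, (if k = (j : ℕ) then f j else 0) = f ⟨k, hk⟩ := by
  have h1 : ∀ j : Fin n, (if k = (j : ℕ) then f j else 0)
      = (if j = (⟨k, hk⟩ : Fin n) then f j else 0) := by
    intro j
    refine if_congr ?_ rfl rfl
    simp [Fin.ext_iff, eq_comm]
  rw [Finset.sum_congr rfl (fun j _ => h1 j), Finset.sum_ite_eq' Finset.univ (⟨k, hk⟩ : Fin n) f]
  simp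

lemma quad_convex_aux (c e d gb a b s t : ℝ) (he : e ≤ c) (ha : 0 ≤ a) (hb : 0 ≤ b)
    (hab : a + b = 1) :
    c * (a * s + b * t - d) ^ 2 - gb * (a * s + b * t) - e * ((a * s + b * t) * (a * s + b * t)) ≤
      a * (c * (s - d) ^ 2 - gb * s - e * (s * s))
        + b * (c * (t - d) ^ 2 - gb * t - e * (t * t)) := by
  have hb' : b = 1 - a := by linarith
  subst hb'
  nlinarith [mul_nonneg (mul_nonneg (mul_nonneg (sub_nonneg.2 he) ha) hb) (sq_nonneg (s - t))]

theorem counterexample_h_properties (m n r : ℕ) (hr : 1 ≤ r) (hrm : r ≤ m) (hmn : m ≤ n)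
    (mu L lam : ℝ) (hmu : 0 < mu) (hL : mu ≤ L) (hlam : 0 < lam)
    (x g y v : Fin m → ℝ)
    (hxpos : ∀ i : Fin m, (i : ℕ) < r → 0 < x i)
    (hglam : ∀ i : Fin m, (i : ℕ) < r → g i = lam)
    (hxzero : ∀ i : Fin m, r ≤ (i : ℕ) → x i = 0)
    (hgpos : ∀ i : Fin m, r ≤ (i : ℕ) → 0 ≤ g i)
    (hgub : ∀ i : Fin m, r ≤ (i : ℕ) → ∀ j : Fin m, (j : ℕ) < r → g i ≤ lam + L * x j)
    (hypos : ∀ i, 0 ≤ y i) (hvpos : ∀ i, 0 ≤ v i)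
    (hxdesc : Antitone x) (hydesc : Antitone y)
    (hbal : rdg m n g + mu • rdg m n x = rdg m n v + mu • rdg m n y)
    (h : Matrix (Fin m) (Fin n) ℝ → ℝ)
    (hdef : ∀ X, h X =
      L / 2 * (∑ i : Fin m, ∑ j : Fin n, if (i : ℕ) = (j : ℕ) then 0 else X i j ^ 2)
      + mu / 2 * (∑ i : Fin m, (X i ⟨(i : ℕ), lt_of_lt_of_le i.isLt hmn⟩ - x i) ^ 2)
      - mdot (rdg m n g) X) :
    ConvexOn ℝ Set.univ (fun X => h X - mu / 2 * mdot X X) ∧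
    ∃ G : Matrix (Fin m) (Fin n) ℝ → Matrix (Fin m) (Fin n) ℝ,
      (∀ X, HasFDerivAt h (toDual (G X)) X) ∧
      (∀ X Y, frob (G X - G Y) ≤ L * frob (X - Y)) ∧
      G (rdg m n x) = -(rdg m n g) ∧
      G (rdg m n y) = -(rdg m n v) := by
  set cc : Fin m → Fin n → ℝ := fun i j => if (i : ℕ) = (j : ℕ) then mu / 2 else L / 2 with hcc
  have hL0 : 0 ≤ L := le_trans hmu.le hL
  -- basic facts about rdg
  have hrdg : ∀ (w : Fin m → ℝ) (i : Fin m) (j : Fin n),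
      rdg m n w i j = if (i : ℕ) = (j : ℕ) then w i else 0 := by
    intro w i j
    by_cases hij : (i : ℕ) = (j : ℕ)
    · simp [rdg, hij, i.isLt, Fin.eta]
    · simp [rdg, hij]
  -- representation of h
  have hrep : ∀ X, h X = ∑ i, ∑ j,
      (cc i j * (X i j - rdg m n x i j) ^ 2 - rdg m n g i j * X i j) := by
    intro X
    have e1 : ∑ i, ∑ j, (cc i j * (X i j - rdg m n x i j) ^ 2 - rdg m n g i j * X i j)
        = (∑ i, ∑ j, cc i j * (X i j - rdg m n x i j) ^ 2) - mdot (rdg m n g) X := by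
      simp [mdot, Finset.sum_sub_distrib]
    have key : ∀ i : Fin m, ∑ j, cc i j * (X i j - rdg m n x i j) ^ 2
        = L / 2 * (∑ j : Fin n, if (i : ℕ) = (j : ℕ) then 0 else X i j ^ 2)
          + mu / 2 * (X i ⟨(i : ℕ), lt_of_lt_of_le i.isLt hmn⟩ - x i) ^ 2 := by
      intro i
      have hsplit : ∀ j : Fin n, cc i j * (X i j - rdg m n x i j) ^ 2
          = (L / 2) * (if (i : ℕ) = (j : ℕ) then 0 else X i j ^ 2)
            + (if (i : ℕ) = (j : ℕ) then mu / 2 * (X i j - x i) ^ 2 else 0) := by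
        intro j
        by_cases hij : (i : ℕ) = (j : ℕ) <;> simp [hcc, hrdg, hij]
      rw [Finset.sum_congr rfl (fun j _ => hsplit j), Finset.sum_add_distrib, ← Finset.mul_sum,
        sum_ite_cast (i : ℕ) (lt_of_lt_of_le i.isLt hmn) (fun j => mu / 2 * (X i j - x i) ^ 2)]
    rw [hdef X, e1, Finset.sum_congr rfl (fun i _ => key i), Finset.sum_add_distrib,
      ← Finset.mul_sum, ← Finset.mul_sum]
  refine ⟨?_, ?_⟩
  · -- convexity of h - (mu/2)‖·‖²
    refine ⟨convex_univ, ?_⟩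
    intro X _ Y _ a b ha hb hab
    simp only [smul_eq_mul]
    rw [hrep, hrep, hrep]
    have hP : ∀ Z : Matrix (Fin m) (Fin n) ℝ,
        (∑ i, ∑ j, (cc i j * (Z i j - rdg m n x i j) ^ 2 - rdg m n g i j * Z i j))
          - mu / 2 * mdot Z Z
        = ∑ i, ∑ j, (cc i j * (Z i j - rdg m n x i j) ^ 2 - rdg m n g i j * Z i j
            - mu / 2 * (Z i j * Z i j)) := by
      intro Z
      rw [mdot, Finset.mul_sum, ← Finset.sum_sub_distrib]
      refine Finset.sum_congr rfl fun i _ => ?_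
      rw [Finset.mul_sum, ← Finset.sum_sub_distrib]
    rw [hP, hP, hP]
    have hcomb : ∀ (F₁ F₂ : Fin m → Fin n → ℝ),
        a * (∑ i, ∑ j, F₁ i j) + b * (∑ i, ∑ j, F₂ i j)
          = ∑ i, ∑ j, (a * F₁ i j + b * F₂ i j) := by
      intro F₁ F₂
      simp [Finset.mul_sum, Finset.sum_add_distrib]
    rw [hcomb]
    refine Finset.sum_le_sum fun i _ => Finset.sum_le_sum fun j _ => ?_
    simp only [Matrix.add_apply, Matrix.smul_apply, smul_eq_mul]
    have hce : mu / 2 ≤ cc i j := by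
      simp only [hcc]; split <;> linarith
    nlinarith [quad_convex_aux (cc i j) (mu / 2) (rdg m n x i j) (rdg m n g i j) a b
      (X i j) (Y i j) hce ha hb hab]
  · -- the gradient map
    refine ⟨fun X => Matrix.of fun i j =>
        2 * cc i j * (X i j - rdg m n x i j) - rdg m n g i j, ?_, ?_, ?_, ?_⟩
    · intro X
      have hderiv : HasFDerivAt (fun Z : Matrix (Fin m) (Fin n) ℝ =>
          ∑ i, ∑ j, (cc i j * (Z i j - rdg m n x i j) ^ 2 - rdg m n g i j * Z i j))
          (∑ i, ∑ j, (2 * cc i j * (X i j - rdg m n x i j) - rdg m n g i j) • evalCLM i j) X := by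
        refine HasFDerivAt.fun_sum fun i _ => HasFDerivAt.fun_sum fun j _ => ?_
        have h1 : HasFDerivAt (fun Z : Matrix (Fin m) (Fin n) ℝ => Z i j) (evalCLM i j) X :=
          (evalCLM i j).hasFDerivAt
        have h2 : HasDerivAt (fun t : ℝ =>
            cc i j * (t - rdg m n x i j) ^ 2 - rdg m n g i j * t)
            (2 * cc i j * (X i j - rdg m n x i j) - rdg m n g i j) (X i j) := by
          have h4 := (((hasDerivAt_id (X i j)).sub_const (rdg m n x i j)).pow 2).const_mul
            (cc i j)
          have h3 := h4.sub ((hasDerivAt_id (X i j)).const_mul (rdg m n g i j))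
          refine h3.congr_deriv ?_
          simp only [id_eq]
          push_cast
          ring
        exact h2.comp_hasFDerivAt X h1
      have heq : toDual ((fun X => Matrix.of fun i j =>
          2 * cc i j * (X i j - rdg m n x i j) - rdg m n g i j) X)
          = ∑ i, ∑ j, (2 * cc i j * (X i j - rdg m n x i j) - rdg m n g i j) • evalCLM i j := by
        refine ContinuousLinearMap.ext fun Y => ?_
        simp only [ContinuousLinearMap.sum_apply, ContinuousLinearMap.smul_apply,
          evalCLM_apply, smul_eq_mul]
        show mdot _ Y = _
        simp [mdot, Matrix.of_apply]
      rw [show h = fun Z => ∑ i, ∑ j,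
        (cc i j * (Z i j - rdg m n x i j) ^ 2 - rdg m n g i j * Z i j) from funext hrep, heq]
      exact hderiv
    · -- Lipschitz bound
      intro X Y
      have hsub : (fun X => Matrix.of fun i j =>
            2 * cc i j * (X i j - rdg m n x i j) - rdg m n g i j) X
          - (fun X => Matrix.of fun i j =>
            2 * cc i j * (X i j - rdg m n x i j) - rdg m n g i j) Y
          = Matrix.of fun i j => 2 * cc i j * (X i j - Y i j) := by
        ext i j
        simp only [Matrix.sub_apply, Matrix.of_apply]
        ring
      have key : mdot (Matrix.of fun i j => 2 * cc i j * (X i j - Y i j))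
          (Matrix.of fun i j => 2 * cc i j * (X i j - Y i j))
          ≤ L ^ 2 * mdot (X - Y) (X - Y) := by
        simp only [mdot, Matrix.of_apply, Matrix.sub_apply]
        rw [Finset.mul_sum]
        refine Finset.sum_le_sum fun i _ => ?_
        rw [Finset.mul_sum]
        refine Finset.sum_le_sum fun j _ => ?_
        have hce : 2 * cc i j ≤ L ∧ 0 ≤ 2 * cc i j := by
          simp only [hcc]; split <;> exact ⟨by linarith, by linarith⟩
        nlinarith [mul_le_mul_of_nonneg_right (mul_self_le_mul_self hce.2 hce.1)
          (mul_self_nonneg (X i j - Y i j))]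
      calc frob _ = Real.sqrt (mdot (Matrix.of fun i j => 2 * cc i j * (X i j - Y i j))
            (Matrix.of fun i j => 2 * cc i j * (X i j - Y i j))) := by rw [hsub]; rfl
        _ ≤ Real.sqrt (L ^ 2 * mdot (X - Y) (X - Y)) := Real.sqrt_le_sqrt key
        _ = L * frob (X - Y) := by
            rw [Real.sqrt_mul (sq_nonneg L), Real.sqrt_sq hL0]; rfl
    · ext i j
      simp only [Matrix.of_apply, Matrix.neg_apply]
      ring
    · have hbal' : ∀ i : Fin m, g i + mu * x i = v i + mu * y i := by
        intro i
        have hb2 := congrFun (congrFun hbal i) ⟨(i : ℕ), lt_of_lt_of_le i.isLt hmn⟩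
        simpa [Matrix.add_apply, Matrix.smul_apply, smul_eq_mul, hrdg] using hb2
      ext i j
      simp only [Matrix.of_apply, Matrix.neg_apply]
      by_cases hij : (i : ℕ) = (j : ℕ)
      · simp only [hrdg, hcc, hij, if_true]
        have := hbal' i
        linarith
      · simp [hrdg, hcc, hij]
end

section
/- Let $0<\mu\le L$, $\lambda>0$, $r\in[m]$, $m\le n$, and let $x\in\mathbb{R}^m$ satisfy $x_1\ge\cdots\ge x_r>0$ and $x_i=0$ for $i>r$, and $g\in\mathbb{R}^m$ satisfy $g_i=\lambda$ for $i\in[r]$ and $g_i\in[0,\lambda+Lx_r]$ for $i>r$. Define $h(X) = \frac{L}{2}\sum_{i=1}^m\sum_{j\neq i}X_{ij}^2 + \frac{\mu}{2}\sum_{i=1}^m(X_{ii}-x_i)^2 - \langle\widetilde{\mathrm{Diag}}(g), X\rangle$ and $F_r(U,V) = h(UV^\top)+\frac{\lambda}{2}(\|U\|_F^2+\|V\|_F^2)$. Then $(\bar U,\bar V)$ with $\bar U = \widetilde{\mathrm{Diag}}(\sqrt{x_1},\dots,\sqrt{x_r})\in\mathbb{R}^{m\times r}$ and $\bar V = \widetilde{\mathrm{Diag}}(\sqrt{x_1},\dots,\sqrt{x_r})\in\mathbb{R}^{n\times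 r}$ is a second-order stationary point of $F_r$. -/
open Matrix Finset

attribute [local instance] Matrix.frobeniusNormedAddCommGroup Matrix.frobeniusNormedSpace

@[reducible] noncomputable def frobTop {m n : ℕ} : TopologicalSpace (Matrix (Fin m) (Fin n) ℝ) :=
  @UniformSpace.toTopologicalSpace _ (@PseudoMetricSpace.toUniformSpace _
    (@SeminormedAddCommGroup.toPseudoMetricSpace _
      (@NormedAddCommGroup.toSeminormedAddCommGroup _ Matrix.frobeniusNormedAddCommGroup)))

@[reducible] noncomputable def frobACG {m n : ℕ} : AddCommGroup (Matrix (Fin m) (Fin n) ℝ) :=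
  @NormedAddCommGroup.toAddCommGroup _ Matrix.frobeniusNormedAddCommGroup

@[reducible] noncomputable def frobACM {m n : ℕ} : AddCommMonoid (Matrix (Fin m) (Fin n) ℝ) :=
  @AddCommGroup.toAddCommMonoid _ frobACG

@[reducible] noncomputable def frobMod {m n : ℕ} : Module ℝ (Matrix (Fin m) (Fin n) ℝ) :=
  NormedSpace.toModule

section FrobTop

attribute [local instance] frobTop frobACG frobACM frobMod

lemma mdot_add_left {m n : ℕ} (A B C : Matrix (Fin m) (Fin n) ℝ) :
    mdot (A + B) C = mdot A C + mdot B C := by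
  simp only [mdot, Matrix.add_apply, ← Finset.sum_add_distrib]
  exact Finset.sum_congr rfl fun i _ => Finset.sum_congr rfl fun j _ => by ring

lemma mdot_smul_left {m n : ℕ} (c : ℝ) (A B : Matrix (Fin m) (Fin n) ℝ) :
    mdot (c • A) B = c * mdot A B := by
  simp only [mdot, Matrix.smul_apply, smul_eq_mul, Finset.mul_sum]
  exact Finset.sum_congr rfl fun i _ => Finset.sum_congr rfl fun j _ => by ring

lemma mdot_comm {m n : ℕ} (A B : Matrix (Fin m) (Fin n) ℝ) : mdot A B = mdot B A := by
  simp only [mdot]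
  exact Finset.sum_congr rfl fun i _ => Finset.sum_congr rfl fun j _ => by ring

lemma mdot_add_right {m n : ℕ} (A B C : Matrix (Fin m) (Fin n) ℝ) :
    mdot A (B + C) = mdot A B + mdot A C := by
  rw [mdot_comm, mdot_add_left, mdot_comm B, mdot_comm C]

lemma mdot_smul_right {m n : ℕ} (c : ℝ) (A B : Matrix (Fin m) (Fin n) ℝ) :
    mdot A (c • B) = c * mdot A B := by
  rw [mdot_comm, mdot_smul_left, mdot_comm]

noncomputable def bil2 {E F G : Type*} [NormedAddCommGroup E] [NormedSpace ℝ E]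
    [FiniteDimensional ℝ E] [NormedAddCommGroup F] [NormedSpace ℝ F] [FiniteDimensional ℝ F]
    [NormedAddCommGroup G] [NormedSpace ℝ G]
    (f : E →ₗ[ℝ] F →ₗ[ℝ] G) : E →L[ℝ] F →L[ℝ] G :=
  LinearMap.toContinuousLinearMap
  { toFun := fun X => LinearMap.toContinuousLinearMap (f X)
    map_add' := fun a b => by ext y; simp
    map_smul' := fun c a => by ext y; simp }
@[simp] lemma bil2_apply {E F G : Type*} [NormedAddCommGroup E] [NormedSpace ℝ E]
    [FiniteDimensional ℝ E] [NormedAddCommGroup F] [NormedSpace ℝ F] [FiniteDimensional ℝ F]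
    [NormedAddCommGroup G] [NormedSpace ℝ G]
    (f : E →ₗ[ℝ] F →ₗ[ℝ] G) (x : E) (y : F) : bil2 f x y = f x y := by
  simp [bil2]

/-- weighted entrywise bilinear form on matrices -/
noncomputable def wbil {m n : ℕ} (W : Matrix (Fin m) (Fin n) ℝ) :
    Matrix (Fin m) (Fin n) ℝ →L[ℝ] Matrix (Fin m) (Fin n) ℝ →L[ℝ] ℝ :=
  bil2 (LinearMap.mk₂ ℝ (fun X Y => ∑ i, ∑ j, W i j * X i j * Y i j)
    (fun X X' Y => by
      simp only [Matrix.add_apply, ← Finset.sum_add_distrib]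
      exact Finset.sum_congr rfl fun i _ => Finset.sum_congr rfl fun j _ => by ring)
    (fun c X Y => by
      simp only [Matrix.smul_apply, smul_eq_mul, Finset.mul_sum]
      exact Finset.sum_congr rfl fun i _ => Finset.sum_congr rfl fun j _ => by ring)
    (fun X Y Y' => by
      simp only [Matrix.add_apply, ← Finset.sum_add_distrib]
      exact Finset.sum_congr rfl fun i _ => Finset.sum_congr rfl fun j _ => by ring)
    (fun c X Y => by
      simp only [Matrix.smul_apply, smul_eq_mul, Finset.mul_sum]
      exact Finset.sum_congr rfl fun i _ => Finset.sum_congr rfl fun j _ => by ring))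

@[simp] lemma wbil_apply {m n : ℕ} (W X Y : Matrix (Fin m) (Fin n) ℝ) :
    wbil W X Y = ∑ i, ∑ j, W i j * X i j * Y i j := by
  simp [wbil, bil2]

/-- the bilinear map (U,V) ↦ U * Vᵀ -/
noncomputable def mulB (m n r : ℕ) :
    Matrix (Fin m) (Fin r) ℝ →L[ℝ] Matrix (Fin n) (Fin r) ℝ →L[ℝ] Matrix (Fin m) (Fin n) ℝ :=
  bil2 (LinearMap.mk₂ ℝ (fun U V => U * Vᵀ)
    (fun U U' V => Matrix.add_mul U U' Vᵀ)
    (fun c U V => Matrix.smul_mul c U Vᵀ)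
    (fun U V V' => by show U * (V + V')ᵀ = _; rw [Matrix.transpose_add, Matrix.mul_add])
    (fun c U V => by show U * (c • V)ᵀ = _; rw [Matrix.transpose_smul, Matrix.mul_smul]))

@[simp] lemma mulB_apply {m n r : ℕ} (U : Matrix (Fin m) (Fin r) ℝ)
    (V : Matrix (Fin n) (Fin r) ℝ) : mulB m n r U V = U * Vᵀ := by simp [mulB, bil2]

/-- derivative of β : p ↦ p.1 * p.2ᵀ, as a bilinear map -/
noncomputable def betaD (m n r : ℕ) :
    (Matrix (Fin m) (Fin r) ℝ × Matrix (Fin n) (Fin r) ℝ) →L[ℝ]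
    (Matrix (Fin m) (Fin r) ℝ × Matrix (Fin n) (Fin r) ℝ) →L[ℝ] Matrix (Fin m) (Fin n) ℝ :=
  bil2 (LinearMap.mk₂ ℝ (fun p w => p.1 * w.2ᵀ + w.1 * p.2ᵀ)
    (fun p p' w => by
      show (p + p').1 * w.2ᵀ + w.1 * (p + p').2ᵀ = _
      simp only [Prod.fst_add, Prod.snd_add, Matrix.add_mul, Matrix.transpose_add,
        Matrix.mul_add]; abel)
    (fun c p w => by
      show (c • p).1 * w.2ᵀ + w.1 * (c • p).2ᵀ = _
      simp only [Prod.smul_fst, Prod.smul_snd, Matrix.smul_mul, Matrix.transpose_smul,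
        Matrix.mul_smul, smul_add])
    (fun p w w' => by
      show p.1 * (w + w').2ᵀ + (w + w').1 * p.2ᵀ = _
      simp only [Prod.fst_add, Prod.snd_add, Matrix.add_mul, Matrix.transpose_add,
        Matrix.mul_add]; abel)
    (fun c p w => by
      show p.1 * (c • w).2ᵀ + (c • w).1 * p.2ᵀ = _
      simp only [Prod.smul_fst, Prod.smul_snd, Matrix.smul_mul, Matrix.transpose_smul,
        Matrix.mul_smul, smul_add]))

@[simp] lemma betaD_apply {m n r : ℕ} (p w : Matrix (Fin m) (Fin r) ℝ × Matrix (Fin n) (Fin r) ℝ) :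
    betaD m n r p w = p.1 * w.2ᵀ + w.1 * p.2ᵀ := by simp [betaD, bil2]

/-- the bilinear form (p,q) ↦ mdot p.1 q.1 + mdot p.2 q.2 -/
noncomputable def sB (m n r : ℕ) :
    (Matrix (Fin m) (Fin r) ℝ × Matrix (Fin n) (Fin r) ℝ) →L[ℝ]
    (Matrix (Fin m) (Fin r) ℝ × Matrix (Fin n) (Fin r) ℝ) →L[ℝ] ℝ :=
  bil2 (LinearMap.mk₂ ℝ (fun p q => mdot p.1 q.1 + mdot p.2 q.2)
    (fun p p' q => by
      show mdot ((p+p').1) q.1 + mdot ((p+p').2) q.2 = _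
      simp only [Prod.fst_add, Prod.snd_add, mdot_add_left]; ring)
    (fun c p q => by
      show mdot ((c•p).1) q.1 + mdot ((c•p).2) q.2 = _
      simp only [Prod.smul_fst, Prod.smul_snd, mdot_smul_left, smul_eq_mul]; ring)
    (fun p q q' => by
      show mdot p.1 ((q+q').1) + mdot p.2 ((q+q').2) = _
      simp only [Prod.fst_add, Prod.snd_add, mdot_add_right]; ring)
    (fun c p q => by
      show mdot p.1 ((c•q).1) + mdot p.2 ((c•q).2) = _
      simp only [Prod.smul_fst, Prod.smul_snd, mdot_smul_right, smul_eq_mul]; ring))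

@[simp] lemma sB_apply {m n r : ℕ} (p q : Matrix (Fin m) (Fin r) ℝ × Matrix (Fin n) (Fin r) ℝ) :
    sB m n r p q = mdot p.1 q.1 + mdot p.2 q.2 := by simp [sB, bil2]

lemma fin_sum_ite_eq_of_lt {N : ℕ} {c : ℕ} (hc : c < N) (f : Fin N → ℝ) :
    ∑ j : Fin N, (if (j : ℕ) = c then f j else 0) = f ⟨c, hc⟩ := by
  rw [Finset.sum_eq_single ⟨c, hc⟩]
  · simp
  · intro b _ hb
    rw [if_neg]
    exact fun h => hb (Fin.ext h)
  · intro hmem; exact absurd (Finset.mem_univ _) hmem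

lemma fin_sum_dite_lt {N M : ℕ} (hMN : M ≤ N) (f : ∀ j : ℕ, j < M → ℝ) :
    (∑ j : Fin N, if h : (j : ℕ) < M then f (j : ℕ) h else 0) = ∑ k : Fin M, f (k : ℕ) k.isLt := by
  have h1 : (∑ j : Fin N, if h : (j : ℕ) < M then f (j : ℕ) h else 0)
      = ∑ j ∈ Finset.range N, (if h : j < M then f j h else 0) :=
    Fin.sum_univ_eq_sum_range (fun a => if h : a < M then f a h else 0) N
  have h2 : (∑ k : Fin M, f (k : ℕ) k.isLt)
      = ∑ j ∈ Finset.range M, (if h : j < M then f j h else 0) := by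
    rw [← Fin.sum_univ_eq_sum_range (fun a => if h : a < M then f a h else 0) M]
    exact Finset.sum_congr rfl fun k _ => by rw [dif_pos k.isLt]
  rw [h1, h2]
  exact (Finset.sum_subset (Finset.range_subset_range.mpr hMN) (fun a _ ha => by
    rw [dif_neg (by simpa using ha)])).symm

lemma fin_sum_le_of_nonneg {N M : ℕ} (hMN : M ≤ N) (f : Fin N → ℝ) (hf : ∀ j, 0 ≤ f j) :
    ∑ k : Fin M, f (Fin.castLE hMN k) ≤ ∑ j : Fin N, f j := by
  have h1 : (∑ j : Fin N, f j)
      = ∑ j ∈ Finset.range N, (if h : j < N then f ⟨j, h⟩ else 0) := by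
    rw [← Fin.sum_univ_eq_sum_range (fun a => if h : a < N then f ⟨a, h⟩ else 0) N]
    exact Finset.sum_congr rfl fun k _ => by rw [dif_pos k.isLt]
  have h2 : (∑ k : Fin M, f (Fin.castLE hMN k))
      = ∑ j ∈ Finset.range M, (if h : j < N then f ⟨j, h⟩ else 0) := by
    rw [← Fin.sum_univ_eq_sum_range (fun a => if h : a < N then f ⟨a, h⟩ else 0) M]
    exact Finset.sum_congr rfl fun k _ => by rw [dif_pos (k.isLt.trans_le hMN)]; rfl
  rw [h1, h2]
  apply Finset.sum_le_sum_of_subset_of_nonneg (Finset.range_subset_range.mpr hMN)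
  intro j _ _
  split_ifs with h
  · exact hf _
  · exact le_refl 0

lemma ite_sum_push {c : Prop} [Decidable c] {K : ℕ} (f : Fin K → ℝ) :
    (if c then ∑ k, f k else 0) = ∑ k, (if c then f k else 0) := by
  split_ifs <;> simp

section Deriv

variable {m n r : ℕ}

lemma wbil_comm (W X Y : Matrix (Fin m) (Fin n) ℝ) : wbil W X Y = wbil W Y X := by
  simp only [wbil_apply]
  exact Finset.sum_congr rfl fun i _ => Finset.sum_congr rfl fun j _ => by ring

lemma sB_comm (p q : Matrix (Fin m) (Fin r) ℝ × Matrix (Fin n) (Fin r) ℝ) :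
    sB m n r p q = sB m n r q p := by
  simp only [sB_apply, mdot_comm p.1, mdot_comm p.2]

lemma hasFDerivAt_mul (p : Matrix (Fin m) (Fin r) ℝ × Matrix (Fin n) (Fin r) ℝ) :
    HasFDerivAt (fun q : Matrix (Fin m) (Fin r) ℝ × Matrix (Fin n) (Fin r) ℝ =>
      mulB m n r q.1 q.2) (betaD m n r p) p := by
  have hc : HasFDerivAt (fun q : Matrix (Fin m) (Fin r) ℝ × Matrix (Fin n) (Fin r) ℝ =>
      mulB m n r q.1) ((mulB m n r).comp (ContinuousLinearMap.fst ℝ (Matrix (Fin m) (Fin r) ℝ) (Matrix (Fin n) (Fin r) ℝ))) p :=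
    (mulB m n r).hasFDerivAt.comp p hasFDerivAt_fst
  have h := hc.clm_apply hasFDerivAt_snd
  have heq : (mulB m n r p.1).comp (ContinuousLinearMap.snd ℝ (Matrix (Fin m) (Fin r) ℝ) (Matrix (Fin n) (Fin r) ℝ))
      + ((mulB m n r).comp (ContinuousLinearMap.fst ℝ (Matrix (Fin m) (Fin r) ℝ) (Matrix (Fin n) (Fin r) ℝ))).flip p.2 = betaD m n r p := by
    refine ContinuousLinearMap.ext fun w => ?_
    simp
  rw [heq] at h
  exact h

noncomputable def toDualF (G : Matrix (Fin m) (Fin n) ℝ) : Matrix (Fin m) (Fin n) ℝ →L[ℝ] ℝ :=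
  toDual G

lemma toDualF_apply {G Y : Matrix (Fin m) (Fin n) ℝ} : toDualF G Y = mdot G Y := rfl

/-- candidate first derivative of Fr -/
noncomputable def Dmap (m n r : ℕ) (W M₀ : Matrix (Fin m) (Fin n) ℝ) (lam : ℝ)
    (p : Matrix (Fin m) (Fin r) ℝ × Matrix (Fin n) (Fin r) ℝ) :
    (Matrix (Fin m) (Fin r) ℝ × Matrix (Fin n) (Fin r) ℝ) →L[ℝ] ℝ :=
  (((2:ℝ) • (wbil W (mulB m n r p.1 p.2)) + toDualF M₀).comp (betaD m n r p))
    + lam • (sB m n r p)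

lemma toDual_apply {G Y : Matrix (Fin m) (Fin n) ℝ} : toDual G Y = mdot G Y := rfl

lemma Dmap_apply (W M₀ : Matrix (Fin m) (Fin n) ℝ) (lam : ℝ)
    (p w : Matrix (Fin m) (Fin r) ℝ × Matrix (Fin n) (Fin r) ℝ) :
    Dmap m n r W M₀ lam p w = 2 * wbil W (p.1 * p.2ᵀ) (betaD m n r p w)
      + mdot M₀ (betaD m n r p w) + lam * sB m n r p w := by
  simp [Dmap, toDualF_apply]

lemma hasFDerivAt_Fr (W M₀ : Matrix (Fin m) (Fin n) ℝ) (lam c0 : ℝ)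
    (Fr : Matrix (Fin m) (Fin r) ℝ × Matrix (Fin n) (Fin r) ℝ → ℝ)
    (hFr : ∀ p, Fr p = wbil W (mulB m n r p.1 p.2) (mulB m n r p.1 p.2)
      + toDualF M₀ (mulB m n r p.1 p.2) + c0 + lam / 2 * sB m n r p p)
    (p : Matrix (Fin m) (Fin r) ℝ × Matrix (Fin n) (Fin r) ℝ) :
    HasFDerivAt Fr (Dmap m n r W M₀ lam p) p := by
  have hβ := hasFDerivAt_mul p
  have hc : HasFDerivAt (fun q : Matrix (Fin m) (Fin r) ℝ × Matrix (Fin n) (Fin r) ℝ =>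
      wbil W (mulB m n r q.1 q.2)) ((wbil W).comp (betaD m n r p)) p :=
    (wbil W).hasFDerivAt.comp p hβ
  have h1 := hc.clm_apply hβ
  have h2 : HasFDerivAt (fun q : Matrix (Fin m) (Fin r) ℝ × Matrix (Fin n) (Fin r) ℝ =>
      toDualF M₀ (mulB m n r q.1 q.2)) ((toDualF M₀).comp (betaD m n r p)) p :=
    (toDualF M₀).hasFDerivAt.comp p hβ
  have h4 : HasFDerivAt (fun q : Matrix (Fin m) (Fin r) ℝ × Matrix (Fin n) (Fin r) ℝ =>
      sB m n r q q) (sB m n r p + (sB m n r).flip p) p := by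
    have := ((sB m n r).hasFDerivAt (x := p)).clm_apply (hasFDerivAt_id p)
    simpa using this
  have h4' := h4.const_mul (lam / 2)
  have htot := ((h1.add h2).add_const c0).add h4'
  have hfun : (fun q : Matrix (Fin m) (Fin r) ℝ × Matrix (Fin n) (Fin r) ℝ =>
      (wbil W (mulB m n r q.1 q.2) (mulB m n r q.1 q.2)
        + toDualF M₀ (mulB m n r q.1 q.2) + c0) + lam / 2 * sB m n r q q) = Fr := by
    funext q
    rw [hFr q]
  simp only [Pi.add_def] at htot
  rw [hfun] at htot
  have heq : ((wbil W (mulB m n r p.1 p.2)).comp (betaD m n r p)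
      + ((wbil W).comp (betaD m n r p)).flip (mulB m n r p.1 p.2)
      + (toDualF M₀).comp (betaD m n r p))
      + (lam / 2) • (sB m n r p + (sB m n r).flip p) = Dmap m n r W M₀ lam p := by
    refine ContinuousLinearMap.ext fun w => ?_
    simp only [Dmap, ContinuousLinearMap.add_apply, ContinuousLinearMap.coe_comp',
      Function.comp_apply, ContinuousLinearMap.flip_apply, ContinuousLinearMap.smul_apply,
      smul_eq_mul]
    rw [wbil_comm W (betaD m n r p w), sB_comm w p]
    ring
  rw [heq] at htot
  exact htot

/-- candidate second derivative (the value as a map) -/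
noncomputable def Hess (m n r : ℕ) (W M₀ : Matrix (Fin m) (Fin n) ℝ) (lam : ℝ)
    (p : Matrix (Fin m) (Fin r) ℝ × Matrix (Fin n) (Fin r) ℝ) :
    (Matrix (Fin m) (Fin r) ℝ × Matrix (Fin n) (Fin r) ℝ) →L[ℝ]
    (Matrix (Fin m) (Fin r) ℝ × Matrix (Fin n) (Fin r) ℝ) →L[ℝ] ℝ :=
  ((ContinuousLinearMap.compL ℝ (Matrix (Fin m) (Fin r) ℝ × Matrix (Fin n) (Fin r) ℝ)
      (Matrix (Fin m) (Fin n) ℝ) ℝ ((2:ℝ) • (wbil W (mulB m n r p.1 p.2)) + toDualF M₀)).comp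
      (betaD m n r))
  + (((ContinuousLinearMap.compL ℝ (Matrix (Fin m) (Fin r) ℝ × Matrix (Fin n) (Fin r) ℝ)
      (Matrix (Fin m) (Fin n) ℝ) ℝ).flip (betaD m n r p)).comp
      ((2:ℝ) • ((wbil W).comp (betaD m n r p))))
  + lam • sB m n r

lemma hasFDerivAt_Dmap (W M₀ : Matrix (Fin m) (Fin n) ℝ) (lam : ℝ)
    (p : Matrix (Fin m) (Fin r) ℝ × Matrix (Fin n) (Fin r) ℝ) :
    HasFDerivAt (Dmap m n r W M₀ lam) (Hess m n r W M₀ lam p) p := by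
  have hβ := hasFDerivAt_mul (m := m) (n := n) (r := r) p
  have hc : HasFDerivAt (fun q : Matrix (Fin m) (Fin r) ℝ × Matrix (Fin n) (Fin r) ℝ =>
      (2:ℝ) • (wbil W (mulB m n r q.1 q.2)) + toDualF M₀)
      ((2:ℝ) • ((wbil W).comp (betaD m n r p))) p := by
    have := ((wbil W).hasFDerivAt.comp p hβ).const_smul (2:ℝ)
    exact this.add_const (toDualF M₀)
  have hd : HasFDerivAt (fun q : Matrix (Fin m) (Fin r) ℝ × Matrix (Fin n) (Fin r) ℝ =>
      betaD m n r q) (betaD m n r) p := (betaD m n r).hasFDerivAt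
  have h1 := hc.clm_comp hd
  have h2 : HasFDerivAt (fun q : Matrix (Fin m) (Fin r) ℝ × Matrix (Fin n) (Fin r) ℝ =>
      lam • sB m n r q) (lam • sB m n r) p := (sB m n r).hasFDerivAt.const_smul lam
  exact h1.add h2

lemma Hess_apply (W M₀ : Matrix (Fin m) (Fin n) ℝ) (lam : ℝ)
    (p w : Matrix (Fin m) (Fin r) ℝ × Matrix (Fin n) (Fin r) ℝ) :
    Hess m n r W M₀ lam p w w
      = 2 * wbil W (p.1 * p.2ᵀ) (betaD m n r w w) + mdot M₀ (betaD m n r w w)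
        + 2 * wbil W (betaD m n r p w) (betaD m n r p w) + lam * sB m n r w w := by
  simp only [Hess, ContinuousLinearMap.add_apply, ContinuousLinearMap.coe_comp',
    Function.comp_apply, ContinuousLinearMap.flip_apply, ContinuousLinearMap.smul_apply,
    ContinuousLinearMap.compL_apply, smul_eq_mul, toDualF_apply, mulB_apply]

end Deriv

lemma rdg_apply {a b c : ℕ} (x : Fin c → ℝ) (i : Fin a) (j : Fin b) :
    rdg a b x i j = if h : (i : ℕ) = (j : ℕ) ∧ (i : ℕ) < c then x ⟨i, h.2⟩ else 0 := rfl

lemma mdot_rdg {m n : ℕ} (hmn : m ≤ n) (v : Fin m → ℝ) (Z : Matrix (Fin m) (Fin n) ℝ) :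
    mdot (rdg m n v) Z = ∑ i, v i * Z i ⟨(i : ℕ), lt_of_lt_of_le i.isLt hmn⟩ := by
  unfold mdot
  refine Finset.sum_congr rfl fun i _ => ?_
  have hstep : ∀ j : Fin n, rdg m n v i j * Z i j
      = if (j : ℕ) = (i : ℕ) then v i * Z i j else 0 := by
    intro j
    rw [rdg_apply]
    by_cases h : (i : ℕ) = (j : ℕ)
    · rw [dif_pos ⟨h, i.isLt⟩, if_pos h.symm]
    · rw [dif_neg (fun hc => h hc.1), if_neg (fun hc => h hc.symm), zero_mul]
  rw [Finset.sum_congr rfl fun j _ => hstep j,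
    fin_sum_ite_eq_of_lt (lt_of_lt_of_le i.isLt hmn) (fun j => v i * Z i j)]

end FrobTop

set_option maxHeartbeats 2000000 in
theorem counterexample_second_order_stationary (m n r : ℕ)
    (hr : 1 ≤ r) (hrm : r ≤ m) (hmn : m ≤ n)
    (mu L lam : ℝ) (hmu : 0 < mu) (hL : mu ≤ L) (hlam : 0 < lam)
    (x g : Fin m → ℝ)
    (hxdesc : Antitone x)
    (hxpos : ∀ i : Fin m, (i : ℕ) < r → 0 < x i)
    (hxzero : ∀ i : Fin m, r ≤ (i : ℕ) → x i = 0)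
    (hglam : ∀ i : Fin m, (i : ℕ) < r → g i = lam)
    (hgpos : ∀ i : Fin m, r ≤ (i : ℕ) → 0 ≤ g i)
    (hgub : ∀ i : Fin m, r ≤ (i : ℕ) → g i ≤ lam + L * x ⟨r - 1, by omega⟩)
    (h : Matrix (Fin m) (Fin n) ℝ → ℝ)
    (hdef : ∀ X, h X =
      L / 2 * (∑ i : Fin m, ∑ j : Fin n, if (i : ℕ) = (j : ℕ) then 0 else X i j ^ 2)
      + mu / 2 * (∑ i : Fin m, (X i ⟨(i : ℕ), lt_of_lt_of_le i.isLt hmn⟩ - x i) ^ 2)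
      - mdot (rdg m n g) X)
    (Fr : Matrix (Fin m) (Fin r) ℝ × Matrix (Fin n) (Fin r) ℝ → ℝ)
    (hFr : ∀ p, Fr p = h (p.1 * p.2ᵀ) + lam / 2 * (mdot p.1 p.1 + mdot p.2 p.2))
    (Ub : Matrix (Fin m) (Fin r) ℝ) (Vb : Matrix (Fin n) (Fin r) ℝ)
    (hU : Ub = rdg m r fun j : Fin r => Real.sqrt (x ⟨(j : ℕ), lt_of_lt_of_le j.isLt hrm⟩))
    (hV : Vb = rdg n r fun j : Fin r => Real.sqrt (x ⟨(j : ℕ), lt_of_lt_of_le j.isLt hrm⟩)) :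
    fderiv ℝ Fr (Ub, Vb) = 0 ∧ ∀ w, 0 ≤ fderiv ℝ (fderiv ℝ Fr) (Ub, Vb) w w := by
  -- weight matrix and linear part
  set W : Matrix (Fin m) (Fin n) ℝ :=
    Matrix.of fun i j => if (i : ℕ) = (j : ℕ) then mu / 2 else L / 2 with hWdef
  set M₀ : Matrix (Fin m) (Fin n) ℝ := rdg m n (fun i => -(mu * x i + g i)) with hM₀def
  set c0 : ℝ := mu / 2 * ∑ i, (x i) ^ 2 with hc0def
  -- Fr in structured form
  have hFr' : ∀ p, Fr p = wbil W (mulB m n r p.1 p.2) (mulB m n r p.1 p.2)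
      + toDualF M₀ (mulB m n r p.1 p.2) + c0 + lam / 2 * sB m n r p p := by
    intro p
    rw [hFr, hdef]
    simp only [mulB_apply, sB_apply]
    set X := p.1 * p.2ᵀ with hXdef
    rw [toDualF_apply, hM₀def, mdot_rdg hmn, mdot_rdg hmn]
    have hW : wbil W X X = ∑ i, (mu / 2 * X i ⟨(i:ℕ), lt_of_lt_of_le i.isLt hmn⟩ ^ 2
        + L / 2 * ∑ j : Fin n, if (i:ℕ) = (j:ℕ) then 0 else X i j ^ 2) := by
      rw [wbil_apply]
      refine Finset.sum_congr rfl fun i _ => ?_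
      have hstep : ∀ j : Fin n, W i j * X i j * X i j
          = (if (j:ℕ) = (i:ℕ) then mu / 2 * X i j ^ 2 else 0)
            + L / 2 * (if (i:ℕ) = (j:ℕ) then 0 else X i j ^ 2) := by
        intro j
        rw [hWdef]
        simp only [Matrix.of_apply]
        by_cases hij : (i:ℕ) = (j:ℕ)
        · rw [if_pos hij, if_pos hij.symm, if_pos hij]; ring
        · rw [if_neg hij, if_neg (fun hc => hij hc.symm), if_neg hij]; ring
      rw [Finset.sum_congr rfl fun j _ => hstep j, Finset.sum_add_distrib,
        fin_sum_ite_eq_of_lt (lt_of_lt_of_le i.isLt hmn)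
          (fun j : Fin n => mu / 2 * X i j ^ 2), ← Finset.mul_sum]
    rw [hW, hc0def]
    rw [show (L / 2 * ∑ i : Fin m, ∑ j : Fin n, if (i:ℕ) = (j:ℕ) then 0 else X i j ^ 2)
        = ∑ i : Fin m, L / 2 * ∑ j : Fin n, (if (i:ℕ) = (j:ℕ) then 0 else X i j ^ 2)
        from Finset.mul_sum _ _ _,
      show (mu / 2 * ∑ i : Fin m, (X i ⟨(i:ℕ), lt_of_lt_of_le i.isLt hmn⟩ - x i) ^ 2)
        = ∑ i : Fin m, mu / 2 * (X i ⟨(i:ℕ), lt_of_lt_of_le i.isLt hmn⟩ - x i) ^ 2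
        from Finset.mul_sum _ _ _,
      show (mu / 2 * ∑ i : Fin m, (x i) ^ 2) = ∑ i : Fin m, mu / 2 * (x i) ^ 2
        from Finset.mul_sum _ _ _]
    rw [← Finset.sum_add_distrib, ← Finset.sum_sub_distrib,
      ← Finset.sum_add_distrib, ← Finset.sum_add_distrib]
    congr 1
    refine Finset.sum_congr rfl fun i _ => ?_
    ring
  have hfd : fderiv ℝ Fr = Dmap m n r W M₀ lam :=
    funext fun p => (hasFDerivAt_Fr W M₀ lam c0 Fr hFr' p).fderiv
  have hx0 : ∀ i : Fin m, 0 ≤ x i := fun i => by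
    by_cases hi : (i : ℕ) < r
    · exact (hxpos i hi).le
    · exact le_of_eq (hxzero i (le_of_not_gt hi)).symm
  have hUbe : ∀ (i : Fin m) (k : Fin r), Ub i k
      = if (i : ℕ) = (k : ℕ) then Real.sqrt (x ⟨(k : ℕ), lt_of_lt_of_le k.isLt hrm⟩) else 0 := by
    intro i k
    rw [hU, rdg_apply]
    by_cases hik : (i : ℕ) = (k : ℕ)
    · rw [dif_pos ⟨hik, by rw [hik]; exact k.isLt⟩, if_pos hik]
      exact congrArg (fun t => Real.sqrt (x t)) (Fin.ext hik)
    · rw [dif_neg (fun hc => hik hc.1), if_neg hik]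
  have hVbe : ∀ (j : Fin n) (k : Fin r), Vb j k
      = if (j : ℕ) = (k : ℕ) then Real.sqrt (x ⟨(k : ℕ), lt_of_lt_of_le k.isLt hrm⟩) else 0 := by
    intro j k
    rw [hV, rdg_apply]
    by_cases hjk : (j : ℕ) = (k : ℕ)
    · rw [dif_pos ⟨hjk, by rw [hjk]; exact k.isLt⟩, if_pos hjk]
      exact congrArg (fun t => Real.sqrt (x t)) (Fin.ext hjk)
    · rw [dif_neg (fun hc => hjk hc.1), if_neg hjk]
  -- product with Ub on the left
  have hUBt : ∀ (B : Matrix (Fin n) (Fin r) ℝ) (i : Fin m) (j : Fin n), (Ub * Bᵀ) i j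
      = if h : (i : ℕ) < r then
          Real.sqrt (x ⟨(i : ℕ), lt_of_lt_of_le h hrm⟩) * B j ⟨(i : ℕ), h⟩ else 0 := by
    intro B i j
    rw [Matrix.mul_apply]
    simp only [Matrix.transpose_apply]
    by_cases hir : (i : ℕ) < r
    · rw [dif_pos hir, Finset.sum_eq_single ⟨(i : ℕ), hir⟩]
      · rw [hUbe, if_pos rfl]
      · intro k _ hk
        rw [hUbe, if_neg, zero_mul]
        exact fun hc => hk (Fin.ext hc.symm)
      · intro hmem; exact absurd (Finset.mem_univ _) hmem
    · rw [dif_neg hir]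
      refine Finset.sum_eq_zero fun k _ => ?_
      rw [hUbe, if_neg, zero_mul]
      exact fun hc => hir (by rw [hc]; exact k.isLt)
  -- product with Vb on the right
  have hAVt : ∀ (A : Matrix (Fin m) (Fin r) ℝ) (i : Fin m) (j : Fin n), (A * Vbᵀ) i j
      = if h : (j : ℕ) < r then
          A i ⟨(j : ℕ), h⟩ * Real.sqrt (x ⟨(j : ℕ), lt_of_lt_of_le h hrm⟩) else 0 := by
    intro A i j
    rw [Matrix.mul_apply]
    simp only [Matrix.transpose_apply]
    by_cases hjr : (j : ℕ) < r
    · rw [dif_pos hjr, Finset.sum_eq_single ⟨(j : ℕ), hjr⟩]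
      · rw [hVbe, if_pos rfl]
      · intro k _ hk
        rw [hVbe, if_neg, mul_zero]
        exact fun hc => hk (Fin.ext hc.symm)
      · intro hmem; exact absurd (Finset.mem_univ _) hmem
    · rw [dif_neg hjr]
      refine Finset.sum_eq_zero fun k _ => ?_
      rw [hVbe, if_neg, mul_zero]
      exact fun hc => hjr (by rw [hc]; exact k.isLt)
  have hXbar : ∀ (i : Fin m) (j : Fin n), (Ub * Vbᵀ) i j
      = if (i : ℕ) = (j : ℕ) then x i else 0 := by
    intro i j
    rw [hUBt Vb i j]
    by_cases hir : (i : ℕ) < r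
    · rw [dif_pos hir, hVbe]
      by_cases hij : (i : ℕ) = (j : ℕ)
      · rw [if_pos hij.symm, if_pos hij]
        exact Real.mul_self_sqrt (hx0 _)
      · rw [if_neg (fun hc => hij hc.symm), if_neg hij, mul_zero]
    · rw [dif_neg hir]
      by_cases hij : (i : ℕ) = (j : ℕ)
      · rw [if_pos hij, hxzero i (le_of_not_gt hir)]
      · rw [if_neg hij]
  have hmdotU : ∀ A : Matrix (Fin m) (Fin r) ℝ, mdot Ub A
      = ∑ k : Fin r, Real.sqrt (x ⟨(k : ℕ), lt_of_lt_of_le k.isLt hrm⟩)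
          * A ⟨(k : ℕ), lt_of_lt_of_le k.isLt hrm⟩ k := by
    intro A
    unfold mdot
    rw [Finset.sum_comm]
    refine Finset.sum_congr rfl fun k _ => ?_
    have hstep : ∀ i : Fin m, Ub i k * A i k
        = if (i : ℕ) = (k : ℕ) then
            Real.sqrt (x ⟨(k : ℕ), lt_of_lt_of_le k.isLt hrm⟩) * A i k else 0 := by
      intro i
      rw [hUbe]
      by_cases hik : (i : ℕ) = (k : ℕ)
      · rw [if_pos hik, if_pos hik]
      · rw [if_neg hik, if_neg hik, zero_mul]
    rw [Finset.sum_congr rfl fun i _ => hstep i,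
      fin_sum_ite_eq_of_lt (lt_of_lt_of_le k.isLt hrm)
        (fun i : Fin m => Real.sqrt (x ⟨(k : ℕ), lt_of_lt_of_le k.isLt hrm⟩) * A i k)]
  have hmdotV : ∀ B : Matrix (Fin n) (Fin r) ℝ, mdot Vb B
      = ∑ k : Fin r, Real.sqrt (x ⟨(k : ℕ), lt_of_lt_of_le k.isLt hrm⟩)
          * B ⟨(k : ℕ), lt_of_lt_of_le k.isLt (hrm.trans hmn)⟩ k := by
    intro B
    unfold mdot
    rw [Finset.sum_comm]
    refine Finset.sum_congr rfl fun k _ => ?_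
    have hstep : ∀ j : Fin n, Vb j k * B j k
        = if (j : ℕ) = (k : ℕ) then
            Real.sqrt (x ⟨(k : ℕ), lt_of_lt_of_le k.isLt hrm⟩) * B j k else 0 := by
      intro j
      rw [hVbe]
      by_cases hjk : (j : ℕ) = (k : ℕ)
      · rw [if_pos hjk, if_pos hjk]
      · rw [if_neg hjk, if_neg hjk, zero_mul]
    rw [Finset.sum_congr rfl fun j _ => hstep j,
      fin_sum_ite_eq_of_lt (lt_of_lt_of_le k.isLt (hrm.trans hmn))
        (fun j : Fin n => Real.sqrt (x ⟨(k : ℕ), lt_of_lt_of_le k.isLt hrm⟩) * B j k)]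
  -- evaluation of the "gradient of f at Xbar" part
  have hGq : ∀ Z : Matrix (Fin m) (Fin n) ℝ,
      2 * wbil W (Ub * Vbᵀ) Z + mdot M₀ Z
        = ∑ i, -(g i * Z i ⟨(i : ℕ), lt_of_lt_of_le i.isLt hmn⟩) := by
    intro Z
    rw [hM₀def, mdot_rdg hmn]
    have hwb : wbil W (Ub * Vbᵀ) Z
        = ∑ i, mu / 2 * (x i * Z i ⟨(i : ℕ), lt_of_lt_of_le i.isLt hmn⟩) := by
      rw [wbil_apply]
      refine Finset.sum_congr rfl fun i _ => ?_
      have hstep : ∀ j : Fin n, W i j * (Ub * Vbᵀ) i j * Z i j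
          = if (j : ℕ) = (i : ℕ) then mu / 2 * (x i * Z i j) else 0 := by
        intro j
        rw [hXbar, hWdef]
        simp only [Matrix.of_apply]
        by_cases hij : (i : ℕ) = (j : ℕ)
        · rw [if_pos hij, if_pos hij, if_pos hij.symm]; ring
        · rw [if_neg hij, if_neg hij, if_neg (fun hc => hij hc.symm), mul_zero, zero_mul]
      rw [Finset.sum_congr rfl fun j _ => hstep j,
        fin_sum_ite_eq_of_lt (lt_of_lt_of_le i.isLt hmn)
          (fun j : Fin n => mu / 2 * (x i * Z i j))]
    rw [hwb,
      show (2 * ∑ i, mu / 2 * (x i * Z i ⟨(i : ℕ), lt_of_lt_of_le i.isLt hmn⟩))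
        = ∑ i, 2 * (mu / 2 * (x i * Z i ⟨(i : ℕ), lt_of_lt_of_le i.isLt hmn⟩))
        from Finset.mul_sum _ _ _,
      ← Finset.sum_add_distrib]
    refine Finset.sum_congr rfl fun i _ => ?_
    ring
  constructor
  · rw [hfd]
    refine ContinuousLinearMap.ext fun w => ?_
    show Dmap m n r W M₀ lam (Ub, Vb) w = (0:ℝ)
    rw [Dmap_apply]
    simp only
    rw [hGq, sB_apply]
    simp only [betaD_apply]
    have hterm : ∀ i : Fin m,
        -(g i * ((Ub * w.2ᵀ + w.1 * Vbᵀ) i ⟨(i : ℕ), lt_of_lt_of_le i.isLt hmn⟩))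
        = if h : (i : ℕ) < r then
            -(lam * (Real.sqrt (x ⟨(i : ℕ), lt_of_lt_of_le h hrm⟩)
                * w.2 ⟨(i : ℕ), lt_of_lt_of_le h (hrm.trans hmn)⟩ ⟨(i : ℕ), h⟩
              + w.1 ⟨(i : ℕ), lt_of_lt_of_le h hrm⟩ ⟨(i : ℕ), h⟩
                * Real.sqrt (x ⟨(i : ℕ), lt_of_lt_of_le h hrm⟩))) else 0 := by
      intro i
      rw [Matrix.add_apply, hUBt w.2 i _, hAVt w.1 i _]
      by_cases hir : (i : ℕ) < r
      · rw [dif_pos hir, dif_pos (show ((⟨(i:ℕ), lt_of_lt_of_le i.isLt hmn⟩ : Fin n) : ℕ) < r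
          from hir), dif_pos hir, hglam i hir]
      · rw [dif_neg hir, dif_neg (show ¬((⟨(i:ℕ), lt_of_lt_of_le i.isLt hmn⟩ : Fin n) : ℕ) < r
          from hir), dif_neg hir]
        simp
    rw [Finset.sum_congr rfl fun i _ => hterm i,
      fin_sum_dite_lt hrm (fun v hv =>
        -(lam * (Real.sqrt (x ⟨v, lt_of_lt_of_le hv hrm⟩)
            * w.2 ⟨v, lt_of_lt_of_le hv (hrm.trans hmn)⟩ ⟨v, hv⟩
          + w.1 ⟨v, lt_of_lt_of_le hv hrm⟩ ⟨v, hv⟩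
            * Real.sqrt (x ⟨v, lt_of_lt_of_le hv hrm⟩)))),
      hmdotU, hmdotV, ← Finset.sum_add_distrib,
      show (lam * ∑ k : Fin r,
          (Real.sqrt (x ⟨(k : ℕ), lt_of_lt_of_le k.isLt hrm⟩)
            * w.1 ⟨(k : ℕ), lt_of_lt_of_le k.isLt hrm⟩ k
          + Real.sqrt (x ⟨(k : ℕ), lt_of_lt_of_le k.isLt hrm⟩)
            * w.2 ⟨(k : ℕ), lt_of_lt_of_le k.isLt (hrm.trans hmn)⟩ k))
        = ∑ k : Fin r, lam *
          (Real.sqrt (x ⟨(k : ℕ), lt_of_lt_of_le k.isLt hrm⟩)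
            * w.1 ⟨(k : ℕ), lt_of_lt_of_le k.isLt hrm⟩ k
          + Real.sqrt (x ⟨(k : ℕ), lt_of_lt_of_le k.isLt hrm⟩)
            * w.2 ⟨(k : ℕ), lt_of_lt_of_le k.isLt (hrm.trans hmn)⟩ k)
        from Finset.mul_sum _ _ _,
      ← Finset.sum_add_distrib]
    rw [show (0:ℝ) = ∑ _k : Fin r, (0:ℝ) by simp]
    refine Finset.sum_congr rfl fun k _ => ?_
    ring
  · intro w
    rw [hfd]
    erw [(hasFDerivAt_Dmap W M₀ lam (Ub, Vb)).fderiv]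
    show 0 ≤ Hess m n r W M₀ lam (Ub, Vb) w w
    rw [Hess_apply]
    simp only
    rw [hGq]
    simp only [betaD_apply]
    rw [sB_apply, mul_add]
    set A := w.1 with hA
    set B := w.2 with hB
    have hL0 : (0:ℝ) ≤ L := (hmu.trans_le hL).le
    -- cross term as double sum
    have h1 : ∀ i : Fin m, -(g i * (A * Bᵀ + A * Bᵀ) i ⟨(i:ℕ), lt_of_lt_of_le i.isLt hmn⟩)
        = ∑ k : Fin r, (-2 * g i) * (A i k * B ⟨(i:ℕ), lt_of_lt_of_le i.isLt hmn⟩ k) := by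
      intro i
      rw [Matrix.add_apply,
        show (A * Bᵀ) i ⟨(i:ℕ), lt_of_lt_of_le i.isLt hmn⟩
          = ∑ k : Fin r, A i k * B ⟨(i:ℕ), lt_of_lt_of_le i.isLt hmn⟩ k from by
            rw [Matrix.mul_apply]; exact Finset.sum_congr rfl fun k _ => rfl,
        show ∀ s : ℝ, -(g i * (s + s)) = (-2 * g i) * s from fun s => by ring,
        Finset.mul_sum]
    have hcross : (∑ i : Fin m, -(g i * (A * Bᵀ + A * Bᵀ) i ⟨(i:ℕ), lt_of_lt_of_le i.isLt hmn⟩))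
        = ∑ i : Fin m, ∑ k : Fin r,
            (-2 * g i) * (A i k * B ⟨(i:ℕ), lt_of_lt_of_le i.isLt hmn⟩ k) :=
      Finset.sum_congr rfl fun i _ => h1 i
    -- pointwise lower bound for the quadratic form
    have hstepA : ∀ (i : Fin m) (j : Fin n),
        (if r ≤ (i:ℕ) ∧ (j:ℕ) < r then L * ((Ub * Bᵀ + A * Vbᵀ) i j)^2 else 0)
        + (if (i:ℕ) < r ∧ r ≤ (j:ℕ) then L * ((Ub * Bᵀ + A * Vbᵀ) i j)^2 else 0)
        ≤ 2 * (W i j * (Ub * Bᵀ + A * Vbᵀ) i j * (Ub * Bᵀ + A * Vbᵀ) i j) := by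
      intro i j
      rw [hWdef]
      simp only [Matrix.of_apply]
      by_cases h1c : r ≤ (i:ℕ) ∧ (j:ℕ) < r
      · rw [if_pos h1c, if_neg (by omega), if_neg (show ¬(i:ℕ) = (j:ℕ) by omega)]
        have : 2 * (L/2 * (Ub * Bᵀ + A * Vbᵀ) i j * (Ub * Bᵀ + A * Vbᵀ) i j)
            = L * ((Ub * Bᵀ + A * Vbᵀ) i j)^2 := by ring
        linarith
      · by_cases h2c : (i:ℕ) < r ∧ r ≤ (j:ℕ)
        · rw [if_neg h1c, if_pos h2c, if_neg (show ¬(i:ℕ) = (j:ℕ) by omega)]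
          have : 2 * (L/2 * (Ub * Bᵀ + A * Vbᵀ) i j * (Ub * Bᵀ + A * Vbᵀ) i j)
              = L * ((Ub * Bᵀ + A * Vbᵀ) i j)^2 := by ring
          linarith
        · rw [if_neg h1c, if_neg h2c]
          have hsq := sq_nonneg ((Ub * Bᵀ + A * Vbᵀ) i j)
          split_ifs
          · nlinarith
          · nlinarith
    have h2 : (∑ i : Fin m, ∑ j : Fin n,
          (if r ≤ (i:ℕ) ∧ (j:ℕ) < r then L * ((Ub * Bᵀ + A * Vbᵀ) i j)^2 else 0))
        + (∑ i : Fin m, ∑ j : Fin n,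
          (if (i:ℕ) < r ∧ r ≤ (j:ℕ) then L * ((Ub * Bᵀ + A * Vbᵀ) i j)^2 else 0))
        ≤ 2 * wbil W (Ub * Bᵀ + A * Vbᵀ) (Ub * Bᵀ + A * Vbᵀ) := by
      have e : 2 * wbil W (Ub * Bᵀ + A * Vbᵀ) (Ub * Bᵀ + A * Vbᵀ)
          = ∑ i : Fin m, ∑ j : Fin n,
            2 * (W i j * (Ub * Bᵀ + A * Vbᵀ) i j * (Ub * Bᵀ + A * Vbᵀ) i j) := by
        rw [wbil_apply, Finset.mul_sum]
        exact Finset.sum_congr rfl fun i _ => Finset.mul_sum _ _ _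
      rw [e, ← Finset.sum_add_distrib]
      refine Finset.sum_le_sum fun i _ => ?_
      rw [← Finset.sum_add_distrib]
      exact Finset.sum_le_sum fun j _ => hstepA i j
    -- evaluate the A-part
    have h3 : (∑ i : Fin m, ∑ j : Fin n,
          (if r ≤ (i:ℕ) ∧ (j:ℕ) < r then L * ((Ub * Bᵀ + A * Vbᵀ) i j)^2 else 0))
        = ∑ i : Fin m, ∑ k : Fin r,
            (if r ≤ (i:ℕ) then L * (x ⟨(k:ℕ), lt_of_lt_of_le k.isLt hrm⟩ * (A i k)^2)
              else 0) := by
      refine Finset.sum_congr rfl fun i _ => ?_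
      by_cases hge : r ≤ (i:ℕ)
      · have hpt : ∀ j : Fin n,
            (if r ≤ (i:ℕ) ∧ (j:ℕ) < r then L * ((Ub * Bᵀ + A * Vbᵀ) i j)^2 else 0)
            = if hj : (j:ℕ) < r then
                L * (x ⟨(j:ℕ), lt_of_lt_of_le hj hrm⟩ * (A i ⟨(j:ℕ), hj⟩)^2) else 0 := by
          intro j
          by_cases hj : (j:ℕ) < r
          · rw [if_pos ⟨hge, hj⟩, dif_pos hj, Matrix.add_apply, hUBt B i j, hAVt A i j,
              dif_neg (by omega), dif_pos hj, zero_add, mul_pow, Real.sq_sqrt (hx0 _)]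
            ring
          · rw [if_neg (fun hc => hj hc.2), dif_neg hj]
        rw [Finset.sum_congr rfl fun j _ => hpt j,
          fin_sum_dite_lt (hrm.trans hmn)
            (fun v hv => L * (x ⟨v, lt_of_lt_of_le hv hrm⟩ * (A i ⟨v, hv⟩)^2))]
        refine Finset.sum_congr rfl fun k _ => ?_
        rw [if_pos hge]
      · rw [Finset.sum_congr rfl fun (j : Fin n) (_ : j ∈ Finset.univ) =>
          (if_neg (fun hc => hge hc.1) :
            (if r ≤ (i:ℕ) ∧ (j:ℕ) < r then L * ((Ub * Bᵀ + A * Vbᵀ) i j)^2 else 0) = 0),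
          Finset.sum_const_zero]
        exact (Finset.sum_eq_zero fun k _ => if_neg hge).symm
    -- bound the B-part
    have h4 : (∑ i : Fin m, ∑ k : Fin r,
          (if r ≤ (i:ℕ) then
            L * (x ⟨(k:ℕ), lt_of_lt_of_le k.isLt hrm⟩
              * (B ⟨(i:ℕ), lt_of_lt_of_le i.isLt hmn⟩ k)^2) else 0))
        ≤ ∑ i : Fin m, ∑ j : Fin n,
            (if (i:ℕ) < r ∧ r ≤ (j:ℕ) then L * ((Ub * Bᵀ + A * Vbᵀ) i j)^2 else 0) := by
      rw [show (∑ i : Fin m, ∑ j : Fin n,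
            (if (i:ℕ) < r ∧ r ≤ (j:ℕ) then L * ((Ub * Bᵀ + A * Vbᵀ) i j)^2 else 0))
          = ∑ j : Fin n, ∑ i : Fin m,
            (if (i:ℕ) < r ∧ r ≤ (j:ℕ) then L * ((Ub * Bᵀ + A * Vbᵀ) i j)^2 else 0)
          from Finset.sum_comm]
      have hin : ∀ j : Fin n,
          (∑ i : Fin m, if (i:ℕ) < r ∧ r ≤ (j:ℕ) then L * ((Ub * Bᵀ + A * Vbᵀ) i j)^2 else 0)
          = if r ≤ (j:ℕ) then
              ∑ k : Fin r, L * (x ⟨(k:ℕ), lt_of_lt_of_le k.isLt hrm⟩ * (B j k)^2) else 0 := by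
        intro j
        by_cases hj : r ≤ (j:ℕ)
        · rw [if_pos hj]
          have hpt : ∀ i : Fin m,
              (if (i:ℕ) < r ∧ r ≤ (j:ℕ) then L * ((Ub * Bᵀ + A * Vbᵀ) i j)^2 else 0)
              = if hi : (i:ℕ) < r then
                  L * (x ⟨(i:ℕ), lt_of_lt_of_le hi hrm⟩ * (B j ⟨(i:ℕ), hi⟩)^2) else 0 := by
            intro i
            by_cases hi : (i:ℕ) < r
            · rw [if_pos ⟨hi, hj⟩, dif_pos hi, Matrix.add_apply, hUBt B i j, hAVt A i j,
                dif_pos hi, dif_neg (by omega), add_zero, mul_pow, Real.sq_sqrt (hx0 _)]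
            · rw [if_neg (fun hc => hi hc.1), dif_neg hi]
          rw [Finset.sum_congr rfl fun i _ => hpt i,
            fin_sum_dite_lt hrm
              (fun v hv => L * (x ⟨v, lt_of_lt_of_le hv hrm⟩ * (B j ⟨v, hv⟩)^2))]
        · rw [if_neg hj]
          exact Finset.sum_eq_zero fun i _ => if_neg (fun hc => hj hc.2)
      rw [Finset.sum_congr rfl fun j _ => hin j]
      have hle := fin_sum_le_of_nonneg hmn
        (fun j => if r ≤ (j:ℕ) then
          ∑ k : Fin r, L * (x ⟨(k:ℕ), lt_of_lt_of_le k.isLt hrm⟩ * (B j k)^2) else 0)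
        (fun j => by
          split_ifs
          · exact Finset.sum_nonneg fun k _ =>
              mul_nonneg hL0 (mul_nonneg (hx0 _) (sq_nonneg _))
          · exact le_refl 0)
      refine le_trans (le_of_eq ?_) hle
      refine Finset.sum_congr rfl fun i _ => ?_
      exact (ite_sum_push (c := r ≤ (i:ℕ))
        (fun k : Fin r => L * (x ⟨(k:ℕ), lt_of_lt_of_le k.isLt hrm⟩
          * (B ⟨(i:ℕ), lt_of_lt_of_le i.isLt hmn⟩ k)^2))).symm
    -- the regularizer terms
    have h5a : lam * mdot A A = ∑ i : Fin m, ∑ k : Fin r, lam * (A i k)^2 := by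
      unfold mdot
      rw [Finset.mul_sum]
      refine Finset.sum_congr rfl fun i _ => ?_
      rw [Finset.mul_sum]
      exact Finset.sum_congr rfl fun k _ => by ring
    have h5b : (∑ i : Fin m, ∑ k : Fin r,
          lam * (B ⟨(i:ℕ), lt_of_lt_of_le i.isLt hmn⟩ k)^2) ≤ lam * mdot B B := by
      unfold mdot
      rw [Finset.mul_sum]
      rw [Finset.sum_congr rfl fun j (_ : j ∈ Finset.univ) =>
        (by rw [Finset.mul_sum]; exact Finset.sum_congr rfl fun k _ => by ring :
          lam * (∑ k : Fin r, B j k * B j k) = ∑ k : Fin r, lam * (B j k)^2)]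
      exact fin_sum_le_of_nonneg hmn (fun j => ∑ k : Fin r, lam * (B j k)^2)
        (fun j => Finset.sum_nonneg fun k _ => mul_nonneg hlam.le (sq_nonneg _))
    -- pointwise key inequality
    have hkey : ∀ (i : Fin m) (k : Fin r),
        0 ≤ lam * (A i k)^2 + lam * (B ⟨(i:ℕ), lt_of_lt_of_le i.isLt hmn⟩ k)^2
          + (if r ≤ (i:ℕ) then L * (x ⟨(k:ℕ), lt_of_lt_of_le k.isLt hrm⟩ * (A i k)^2) else 0)
          + (if r ≤ (i:ℕ) then
              L * (x ⟨(k:ℕ), lt_of_lt_of_le k.isLt hrm⟩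
                * (B ⟨(i:ℕ), lt_of_lt_of_le i.isLt hmn⟩ k)^2) else 0)
          + (-2 * g i) * (A i k * B ⟨(i:ℕ), lt_of_lt_of_le i.isLt hmn⟩ k) := by
      intro i k
      set a := A i k
      set b := B ⟨(i:ℕ), lt_of_lt_of_le i.isLt hmn⟩ k
      set c := x ⟨(k:ℕ), lt_of_lt_of_le k.isLt hrm⟩ with hc
      have hc0 : 0 ≤ c := hx0 _
      by_cases hge : r ≤ (i:ℕ)
      · rw [if_pos hge, if_pos hge]
        have hg0 : 0 ≤ g i := hgpos i hge
        have hgle : g i ≤ lam + L * c := by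
          refine (hgub i hge).trans ?_
          have hxle : x ⟨r - 1, by omega⟩ ≤ c := by
            refine hxdesc ?_
            rw [Fin.le_def]
            simp only
            omega
          nlinarith
        nlinarith [mul_nonneg hg0 (sq_nonneg (a - b)),
          mul_nonneg (sub_nonneg.mpr hgle) (add_nonneg (sq_nonneg a) (sq_nonneg b))]
      · rw [if_neg hge, if_neg hge, hglam i (lt_of_not_ge hge)]
        nlinarith [sq_nonneg (a - b), hlam.le]
    have hsum : (0:ℝ) ≤ ∑ i : Fin m, ∑ k : Fin r,
        (lam * (A i k)^2 + lam * (B ⟨(i:ℕ), lt_of_lt_of_le i.isLt hmn⟩ k)^2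
          + (if r ≤ (i:ℕ) then L * (x ⟨(k:ℕ), lt_of_lt_of_le k.isLt hrm⟩ * (A i k)^2) else 0)
          + (if r ≤ (i:ℕ) then
              L * (x ⟨(k:ℕ), lt_of_lt_of_le k.isLt hrm⟩
                * (B ⟨(i:ℕ), lt_of_lt_of_le i.isLt hmn⟩ k)^2) else 0)
          + (-2 * g i) * (A i k * B ⟨(i:ℕ), lt_of_lt_of_le i.isLt hmn⟩ k)) :=
      Finset.sum_nonneg fun i _ => Finset.sum_nonneg fun k _ => hkey i k
    have hsplit : (∑ i : Fin m, ∑ k : Fin r,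
        (lam * (A i k)^2 + lam * (B ⟨(i:ℕ), lt_of_lt_of_le i.isLt hmn⟩ k)^2
          + (if r ≤ (i:ℕ) then L * (x ⟨(k:ℕ), lt_of_lt_of_le k.isLt hrm⟩ * (A i k)^2) else 0)
          + (if r ≤ (i:ℕ) then
              L * (x ⟨(k:ℕ), lt_of_lt_of_le k.isLt hrm⟩
                * (B ⟨(i:ℕ), lt_of_lt_of_le i.isLt hmn⟩ k)^2) else 0)
          + (-2 * g i) * (A i k * B ⟨(i:ℕ), lt_of_lt_of_le i.isLt hmn⟩ k)))
        = (∑ i : Fin m, ∑ k : Fin r, lam * (A i k)^2)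
          + (∑ i : Fin m, ∑ k : Fin r, lam * (B ⟨(i:ℕ), lt_of_lt_of_le i.isLt hmn⟩ k)^2)
          + (∑ i : Fin m, ∑ k : Fin r,
              (if r ≤ (i:ℕ) then
                L * (x ⟨(k:ℕ), lt_of_lt_of_le k.isLt hrm⟩ * (A i k)^2) else 0))
          + (∑ i : Fin m, ∑ k : Fin r,
              (if r ≤ (i:ℕ) then
                L * (x ⟨(k:ℕ), lt_of_lt_of_le k.isLt hrm⟩
                  * (B ⟨(i:ℕ), lt_of_lt_of_le i.isLt hmn⟩ k)^2) else 0))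
          + (∑ i : Fin m, ∑ k : Fin r,
              (-2 * g i) * (A i k * B ⟨(i:ℕ), lt_of_lt_of_le i.isLt hmn⟩ k)) := by
      simp only [Finset.sum_add_distrib]
    rw [hcross]
    linarith [h2, h3, h4, h5a, h5b, hsum, hsplit]
end
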